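/- For the complex Grassmannian Gr(p, p+q; ℂ), viewed as a Hermitian symmetric space, the complex positivity ℓ (minimum over nonzero tangent vectors Y of the rank of H_Y(W,Z) = ⟨R(Y,JY)W,JZ⟩ on the holomorphic tangent space) equals p + q - 1. -/

import Mathlib

open Matrix

/-- The tangent space of `Gr(p, p+q; ℂ)`: `q × p` complex matrices. -/
abbrev Mat (p q : ℕ) : Type := Matrix (Fin q) (Fin p) ℂ

/-- The curvature tensor of the complex Grassmannian `Gr(p, p+q; ℂ)` in matrix form:
`R(X,Y)Z = -(XY*Z + ZY*X) + (YX*Z + ZX*Y)`. -/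
noncomputable def grassCurv {p q : ℕ} (X Y Z : Mat p q) : Mat p q :=
  -(X * Yᴴ * Z + Z * Yᴴ * X) + (Y * Xᴴ * Z + Z * Xᴴ * Y)

/-- The form `H_Y(W, Z) = ⟨R(Y, JY)W, JZ⟩` on the holomorphic tangent space, as a
`ℂ`-linear functional in `W` for each fixed `Z` (here `J` is multiplication by `i` and
the Hermitian extension of the metric `⟨A,B⟩ = Re tr(AB*)` is `tr(AB*)`). -/
noncomputable def grassH {p q : ℕ} (Y Z : Mat p q) : (Mat p q) →ₗ[ℂ] ℂ where
  toFun W := Matrix.trace (grassCurv Y (Complex.I • Y) W * (Complex.I • Z)ᴴ)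
  map_add' W₁ W₂ := by
    simp [grassCurv, Matrix.mul_add, Matrix.add_mul, Matrix.neg_mul,
      Matrix.trace_add, Matrix.trace_neg]
    ring
  map_smul' c W := by
    simp [grassCurv, Matrix.mul_smul, Matrix.smul_mul, Matrix.add_mul, Matrix.neg_mul,
      Matrix.trace_add, Matrix.trace_neg, Matrix.trace_smul, smul_smul, smul_add,
      smul_neg]
    ring_nf
    simp [Complex.I_sq]

/-- The null space of the form `H_Y` on the holomorphic tangent space. -/
noncomputable def grassNull {p q : ℕ} (Y : Mat p q) : Submodule ℂ (Mat p q) :=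
  ⨅ Z : Mat p q, LinearMap.ker (grassH Y Z)

/-- The complex rank `ℓ(Y)` of `H_Y` on the holomorphic tangent space
(of complex dimension `p q`). -/
noncomputable def grassRank {p q : ℕ} (Y : Mat p q) : ℕ :=
  p * q - Module.finrank ℂ (grassNull Y)

/-! ### Auxiliary lemmas -/

section Aux

variable {p q : ℕ}

lemma trace_hermsq {m n : Type*} [Fintype m] [Fintype n] (A : Matrix m n ℂ) :
    Matrix.trace (Aᴴ * A) = ((∑ j, ∑ i, Complex.normSq (A i j) : ℝ) : ℂ) := by
  simp only [Matrix.trace, Matrix.diag, Matrix.mul_apply, Matrix.conjTranspose_apply,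
    Complex.star_def, ← Complex.normSq_eq_conj_mul_self]
  push_cast
  rfl

lemma eq_zero_of_traces {m n m' n' : Type*} [Fintype m] [Fintype n] [Fintype m'] [Fintype n']
    (A : Matrix m n ℂ) (B : Matrix m' n' ℂ)
    (h : Matrix.trace (Aᴴ * A) + Matrix.trace (Bᴴ * B) = 0) : A = 0 ∧ B = 0 := by
  rw [trace_hermsq, trace_hermsq, ← Complex.ofReal_add] at h
  have h' : (∑ j, ∑ i, Complex.normSq (A i j)) + (∑ j, ∑ i, Complex.normSq (B i j)) = 0 := by
    exact_mod_cast h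
  have nnA : 0 ≤ ∑ j, ∑ i, Complex.normSq (A i j) :=
    Finset.sum_nonneg fun j _ => Finset.sum_nonneg fun i _ => Complex.normSq_nonneg _
  have nnB : 0 ≤ ∑ j, ∑ i, Complex.normSq (B i j) :=
    Finset.sum_nonneg fun j _ => Finset.sum_nonneg fun i _ => Complex.normSq_nonneg _
  have hA0 : (∑ j, ∑ i, Complex.normSq (A i j)) = 0 := by linarith
  have hB0 : (∑ j, ∑ i, Complex.normSq (B i j)) = 0 := by linarith
  constructor
  · ext i j
    have := (Finset.sum_eq_zero_iff_of_nonneg (fun j _ => Finset.sum_nonneg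
      (fun i _ => Complex.normSq_nonneg _))).mp hA0 j (Finset.mem_univ j)
    have := (Finset.sum_eq_zero_iff_of_nonneg (fun i _ => Complex.normSq_nonneg _)).mp this i
      (Finset.mem_univ i)
    simpa using Complex.normSq_eq_zero.mp this
  · ext i j
    have := (Finset.sum_eq_zero_iff_of_nonneg (fun j _ => Finset.sum_nonneg
      (fun i _ => Complex.normSq_nonneg _))).mp hB0 j (Finset.mem_univ j)
    have := (Finset.sum_eq_zero_iff_of_nonneg (fun i _ => Complex.normSq_nonneg _)).mp this i
      (Finset.mem_univ i)
    simpa using Complex.normSq_eq_zero.mp this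

lemma curv_eq (Y W : Mat p q) :
    grassCurv Y (Complex.I • Y) W = (2 * Complex.I) • (Y * Yᴴ * W + W * (Yᴴ * Y)) := by
  simp only [grassCurv, Matrix.conjTranspose_smul, Matrix.mul_smul, Matrix.smul_mul,
    RingHom.id_apply, Complex.star_def, Complex.conj_I, Matrix.mul_assoc]
  module

lemma grassH_eq (Y Z W : Mat p q) :
    grassH Y Z W = 2 * Matrix.trace ((Y * Yᴴ * W + W * (Yᴴ * Y)) * Zᴴ) := by
  show Matrix.trace (grassCurv Y (Complex.I • Y) W * (Complex.I • Z)ᴴ) = _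
  rw [curv_eq]
  simp only [Matrix.conjTranspose_smul, Matrix.smul_mul, Matrix.mul_smul, Complex.star_def,
    Complex.conj_I, Matrix.trace_smul, smul_smul, smul_eq_mul]
  ring_nf
  simp [Complex.I_sq]

lemma mem_grassNull_iff (Y W : Mat p q) :
    W ∈ grassNull Y ↔ Yᴴ * W = 0 ∧ W * Yᴴ = 0 := by
  have hmem : W ∈ grassNull Y ↔ ∀ Z, Matrix.trace ((Y * Yᴴ * W + W * (Yᴴ * Y)) * Zᴴ) = 0 := by
    simp only [grassNull, Submodule.mem_iInf, LinearMap.mem_ker]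
    constructor
    · intro h Z
      have := h Z
      rw [grassH_eq] at this
      have h2 : (2 : ℂ) ≠ 0 := two_ne_zero
      exact (mul_eq_zero.mp this).resolve_left h2
    · intro h Z
      rw [grassH_eq]; exact mul_eq_zero_of_right _ (h Z)
  rw [hmem]
  constructor
  · intro h
    set M := Y * Yᴴ * W + W * (Yᴴ * Y) with hM
    have hM0 : M = 0 := by
      have := h M
      replace this := (Matrix.trace_mul_comm Mᴴ M).trans this
      exact (eq_zero_of_traces M (0 : Matrix (Fin 0) (Fin 0) ℂ) (by simpa using this)).1
    have key : Matrix.trace ((Yᴴ * W)ᴴ * (Yᴴ * W)) + Matrix.trace ((W * Yᴴ)ᴴ * (W * Yᴴ)) = 0 := by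
      have h1 : Matrix.trace (Wᴴ * M) = 0 := by rw [hM0, Matrix.mul_zero, Matrix.trace_zero]
      rw [hM, Matrix.mul_add, Matrix.trace_add] at h1
      have e1 : Wᴴ * (Y * Yᴴ * W) = (Yᴴ * W)ᴴ * (Yᴴ * W) := by
        simp [Matrix.conjTranspose_mul, Matrix.mul_assoc]
      have e2 : Matrix.trace (Wᴴ * (W * (Yᴴ * Y))) = Matrix.trace ((W * Yᴴ)ᴴ * (W * Yᴴ)) := by
        simp only [Matrix.conjTranspose_mul, Matrix.conjTranspose_conjTranspose]
        rw [Matrix.mul_assoc Y, Matrix.trace_mul_comm Y]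
        simp only [Matrix.mul_assoc]
      rw [e1] at h1
      rw [← e2]
      exact h1
    exact eq_zero_of_traces _ _ key
  · rintro ⟨h1, h2⟩ Z
    rw [show Y * Yᴴ * W + W * (Yᴴ * Y) = Y * (Yᴴ * W) + (W * Yᴴ) * Y from by
      rw [Matrix.mul_assoc, Matrix.mul_assoc], h1, h2]
    simp
    exact (congrArg Matrix.trace (Matrix.zero_mul _)).trans (Matrix.trace_zero ..)

noncomputable def Tmap {p q : ℕ} (Y : Mat p q) (a : Fin q) (b : Fin p) :
    Mat p q →ₗ[ℂ] (Fin p → ℂ) × ({i : Fin q // i ≠ a} → ℂ) where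
  toFun W := (fun j => (Yᴴ * W) b j, fun i => (W * Yᴴ) i.1 a)
  map_add' W₁ W₂ := by
    refine Prod.ext ?_ ?_ <;> funext x <;> simp [Matrix.mul_add, Matrix.add_mul]
  map_smul' c W := by
    refine Prod.ext ?_ ?_ <;> funext x <;> simp [Matrix.mul_smul, Matrix.smul_mul]

lemma Tmap_surjective (Y : Mat p q) (a : Fin q) (b : Fin p) (hY : Y a b ≠ 0) :
    Function.Surjective (Tmap Y a b) := by
  rintro ⟨c, d⟩
  set t := (starRingEnd ℂ) (Y a b) with ht
  have ht0 : t ≠ 0 := by simpa [ht] using hY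
  set β : Fin q → ℂ := fun i => if h : i = a then 0 else d ⟨i, h⟩ / t with hβ
  set s : ℂ := ∑ i, (starRingEnd ℂ) (Y i b) * β i with hs
  set α : Fin p → ℂ := fun j => (c j - if j = b then s else 0) / t with hα
  have hβa : β a = 0 := by simp [hβ]
  set W0 : Mat p q := Matrix.of fun i j => if i = a then α j else if j = b then β i else 0
    with hW0
  refine ⟨W0, ?_⟩
  refine Prod.ext ?_ ?_
  · funext j
    show (Yᴴ * W0) b j = c j
    rw [Matrix.mul_apply]
    have hterm : ∀ i, Yᴴ b i * W0 i j
        = (if i = a then t * α j else 0)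
          + (if j = b then (starRingEnd ℂ) (Y i b) * β i else 0) := by
      intro i
      by_cases hia : i = a <;> by_cases hjb : j = b <;>
        simp [hW0, Matrix.conjTranspose_apply, hia, hjb, hβa, ht]
    rw [Finset.sum_congr rfl fun i _ => hterm i, Finset.sum_add_distrib,
      Finset.sum_ite_eq' Finset.univ a fun _ => t * α j]
    have h2 : (∑ i, if j = b then (starRingEnd ℂ) (Y i b) * β i else 0)
        = if j = b then s else 0 := by
      split_ifs with hjb <;> simp [hs]
    rw [h2]
    simp only [Finset.mem_univ, if_true, hα]
    field_simp
    ring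
  · funext i
    show (W0 * Yᴴ) i.1 a = d i
    rw [Matrix.mul_apply]
    have hterm : ∀ j, W0 i.1 j * Yᴴ j a = if j = b then β i.1 * t else 0 := by
      intro j
      by_cases hjb : j = b <;> simp [hW0, Matrix.conjTranspose_apply, i.2, hjb, ht]
    rw [Finset.sum_congr rfl fun j _ => hterm j,
      Finset.sum_ite_eq' Finset.univ b fun _ => β i.1 * t]
    simp only [Finset.mem_univ, if_true, hβ, dif_neg i.2]
    field_simp

lemma null_le_ker (Y : Mat p q) (a : Fin q) (b : Fin p) :
    grassNull Y ≤ LinearMap.ker (Tmap Y a b) := by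
  intro W hW
  rw [mem_grassNull_iff] at hW
  rw [LinearMap.mem_ker]
  refine Prod.ext ?_ ?_ <;> funext x <;> simp [Tmap, hW.1, hW.2]

lemma ker_finrank (Y : Mat p q) (a : Fin q) (b : Fin p) (hY : Y a b ≠ 0) :
    Module.finrank ℂ (LinearMap.ker (Tmap Y a b)) + (p + (q - 1)) = p * q := by
  have h1 := (Tmap Y a b).finrank_range_add_finrank_ker
  rw [LinearMap.range_eq_top.mpr (Tmap_surjective Y a b hY), finrank_top] at h1
  have h2 : Module.finrank ℂ ((Fin p → ℂ) × ({i : Fin q // i ≠ a} → ℂ)) = p + (q - 1) := by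
    rw [Module.finrank_prod, Module.finrank_fintype_fun_eq_card,
      Module.finrank_fintype_fun_eq_card, Fintype.card_fin]
    congr 1
    rw [Fintype.card_subtype_compl, Fintype.card_subtype_eq, Fintype.card_fin]
  have h3 : Module.finrank ℂ (Mat p q) = p * q := by
    rw [Module.finrank_matrix, Fintype.card_fin, Fintype.card_fin, Module.finrank_self,
      mul_one, Nat.mul_comm]
  rw [h2, h3] at h1
  omega

lemma ker_le_null (a0 : Fin q) (b0 : Fin p) (W : Mat p q)
    (hW : W ∈ LinearMap.ker (Tmap (Matrix.of fun i j =>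
      if i = a0 ∧ j = b0 then (1 : ℂ) else 0) a0 b0)) :
    W ∈ grassNull (Matrix.of fun i j => if i = a0 ∧ j = b0 then (1 : ℂ) else 0) := by
  set Y₀ : Mat p q := Matrix.of fun i j => if i = a0 ∧ j = b0 then (1 : ℂ) else 0 with hY₀
  rw [LinearMap.mem_ker] at hW
  have h1 : ∀ j, (Y₀ᴴ * W) b0 j = 0 := fun j => congrFun (congrArg Prod.fst hW) j
  have h2 : ∀ i (h : i ≠ a0), (W * Y₀ᴴ) i a0 = 0 := fun i h =>
    congrFun (congrArg Prod.snd hW) ⟨i, h⟩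
  have hYW : ∀ j' j, (Y₀ᴴ * W) j' j = if j' = b0 then W a0 j else 0 := by
    intro j' j
    rw [Matrix.mul_apply]
    rw [Finset.sum_congr rfl (fun i _ => show Y₀ᴴ j' i * W i j
        = if i = a0 then (if j' = b0 then W a0 j else 0) else 0 from by
      by_cases hi : i = a0 <;> by_cases hj : j' = b0 <;>
        simp [hY₀, Matrix.conjTranspose_apply, hi, hj])]
    simp [Finset.sum_ite_eq']
  have hWY : ∀ i i', (W * Y₀ᴴ) i i' = if i' = a0 then W i b0 else 0 := by
    intro i i'
    rw [Matrix.mul_apply]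
    rw [Finset.sum_congr rfl (fun j _ => show W i j * Y₀ᴴ j i'
        = if j = b0 then (if i' = a0 then W i b0 else 0) else 0 from by
      by_cases hj : j = b0 <;> by_cases hi : i' = a0 <;>
        simp [hY₀, Matrix.conjTranspose_apply, hi, hj])]
    simp [Finset.sum_ite_eq']
  have hrow : ∀ j, W a0 j = 0 := by
    intro j
    have := h1 j
    rw [hYW] at this
    simpa using this
  have hcol : ∀ i, W i b0 = 0 := by
    intro i
    by_cases hi : i = a0
    · rw [hi]; exact hrow b0
    · have := h2 i hi
      rw [hWY] at this
      simpa using this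
  rw [mem_grassNull_iff]
  constructor
  · ext j' j
    rw [hYW]
    split_ifs with h
    · simp [hrow j]
    · simp
  · ext i i'
    rw [hWY]
    split_ifs with h
    · simp [hcol i]
    · simp

lemma grassRank_lower (Y : Mat p q) (hY : Y ≠ 0) (hp : 0 < p) (hq : 0 < q) :
    p + q - 1 ≤ grassRank Y := by
  have hex : ∃ a b, Y a b ≠ 0 := by
    by_contra h
    push_neg at h
    exact hY (by ext a b; simpa using h a b)
  obtain ⟨a, b, hab⟩ := hex
  have hle : Module.finrank ℂ (grassNull Y)
      ≤ Module.finrank ℂ (LinearMap.ker (Tmap Y a b)) :=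
    Submodule.finrank_mono (null_le_ker Y a b)
  have hker := ker_finrank Y a b hab
  obtain ⟨N, hN⟩ : ∃ N, p * q = N := ⟨_, rfl⟩
  rw [hN] at hker
  unfold grassRank
  rw [hN]
  omega

lemma grassRank_Y0 (hp : 0 < p) (hq : 0 < q) :
    grassRank (Matrix.of fun i j =>
      if i = (⟨0, hq⟩ : Fin q) ∧ j = (⟨0, hp⟩ : Fin p) then (1 : ℂ) else 0) = p + q - 1 := by
  set a0 : Fin q := ⟨0, hq⟩
  set b0 : Fin p := ⟨0, hp⟩
  set Y₀ : Mat p q := Matrix.of fun i j => if i = a0 ∧ j = b0 then (1 : ℂ) else 0 with hY₀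
  have hab : Y₀ a0 b0 ≠ 0 := by simp [hY₀]
  have heq : grassNull Y₀ = LinearMap.ker (Tmap Y₀ a0 b0) :=
    le_antisymm (null_le_ker Y₀ a0 b0) (fun W hW => ker_le_null a0 b0 W hW)
  have hker := ker_finrank Y₀ a0 b0 hab
  unfold grassRank
  rw [heq]
  obtain ⟨N, hN⟩ : ∃ N, p * q = N := ⟨_, rfl⟩
  rw [hN] at hker ⊢
  omega

end Aux

/-- The complex positivity `ℓ` of the complex Grassmannian `Gr(p, p+q; ℂ)`, the minimum
over nonzero tangent vectors `Y` of the rank of `H_Y(W,Z) = ⟨R(Y,JY)W,JZ⟩`, equals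
`p + q - 1`. -/
theorem stmt_18 (p q : ℕ) (hp : 0 < p) (hq : 0 < q) :
    sInf {n : ℕ | ∃ Y : Mat p q, Y ≠ 0 ∧ n = grassRank Y} = p + q - 1 := by
  have hY₀ne : (Matrix.of fun i j =>
      if i = (⟨0, hq⟩ : Fin q) ∧ j = (⟨0, hp⟩ : Fin p) then (1 : ℂ) else 0) ≠ (0 : Mat p q) := by
    intro h
    have := congrFun (congrFun h ⟨0, hq⟩) ⟨0, hp⟩
    simp at this
  have hmem : p + q - 1 ∈ {n : ℕ | ∃ Y : Mat p q, Y ≠ 0 ∧ n = grassRank Y} :=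
    ⟨_, hY₀ne, (grassRank_Y0 hp hq).symm⟩
  refine le_antisymm (csInf_le (OrderBot.bddBelow _) hmem) (le_csInf ⟨_, hmem⟩ ?_)
  rintro n ⟨Y, hY, rfl⟩
  exact grassRank_lower Y hY hp hq
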